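/- Let λ = x + yi be a complex number with y > 0, regarded as a quaternion. For an n×n complex matrix M (regarded as a quaternion matrix with zero j and k parts), define the 4n×4n quaternion matrix X_M = [[4I_n, 0, I_n·j, M·j],[0, 3I_n, I_n·j, I_n·j],[0, 0, 2I_n, 0],[0, 0, 0, I_n]] and the 8n×8n quaternion matrix A_M = [[λ·I_{4n}, X_M],[0, λ·I_{4n}]]. Then for n×n complex matrices M and N: M and N are unitarily similar over ℂ (N = U*MU for some complex unitary U) if and only if A_M and A_N are unitarily similar over ℍ. -/

import Mathlib

open Matrix
open scoped Quaternion

noncomputable section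

/-- A quaternion matrix `U` is unitary if `Uᴴ * U = 1`. -/
def IsUnitaryM {m : Type*} [Fintype m] [DecidableEq m] (U : Matrix m m ℍ[ℝ]) : Prop :=
  Uᴴ * U = 1

/-- `A` and `B` are unitarily similar if `A = Uᴴ * B * U` for some unitary `U`. -/
def UnitarilySimilar {m : Type*} [Fintype m] [DecidableEq m] (A B : Matrix m m ℍ[ℝ]) : Prop :=
  ∃ U : Matrix m m ℍ[ℝ], IsUnitaryM U ∧ A = Uᴴ * B * U

/-- The embedding of `ℂ = ℝ + ℝi` into the quaternions. -/
def cq (z : ℂ) : ℍ[ℝ] := ⟨z.re, z.im, 0, 0⟩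

/-- The quaternion unit `j`. -/
def jq : ℍ[ℝ] := ⟨0, 0, 1, 0⟩

/-- The block matrix `X_M = [[4I, 0, I·j, M·j],[0, 3I, I·j, I·j],[0, 0, 2I, 0],[0, 0, 0, I]]`
built from a complex matrix `M`, indexed by `Fin 4 × Fin n`. -/
def XM {n : ℕ} (M : Matrix (Fin n) (Fin n) ℂ) :
    Matrix (Fin 4 × Fin n) (Fin 4 × Fin n) ℍ[ℝ] :=
  fun x y =>
    let d : ℍ[ℝ] := if x.2 = y.2 then 1 else 0
    if x.1 = 0 ∧ y.1 = 0 then 4 * d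
    else if x.1 = 0 ∧ y.1 = 2 then d * jq
    else if x.1 = 0 ∧ y.1 = 3 then cq (M x.2 y.2) * jq
    else if x.1 = 1 ∧ y.1 = 1 then 3 * d
    else if x.1 = 1 ∧ y.1 = 2 then d * jq
    else if x.1 = 1 ∧ y.1 = 3 then d * jq
    else if x.1 = 2 ∧ y.1 = 2 then 2 * d
    else if x.1 = 3 ∧ y.1 = 3 then d
    else 0

/-- The `8n × 8n` quaternion matrix `A_M = [[λ·I, X_M],[0, λ·I]]`. -/
def AM {n : ℕ} (lam : ℂ) (M : Matrix (Fin n) (Fin n) ℂ) :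
    Matrix ((Fin 4 × Fin n) ⊕ (Fin 4 × Fin n)) ((Fin 4 × Fin n) ⊕ (Fin 4 × Fin n)) ℍ[ℝ] :=
  Matrix.fromBlocks (Matrix.diagonal fun _ => cq lam) (XM M) 0
    (Matrix.diagonal fun _ => cq lam)

def qre (q : ℍ[ℝ]) : ℂ := ⟨q.re, q.imI⟩
def qj (q : ℍ[ℝ]) : ℂ := ⟨q.imJ, q.imK⟩

@[simp] lemma qre_add (a b : ℍ[ℝ]) : qre (a + b) = qre a + qre b := by
  simp [qre, Complex.ext_iff]
@[simp] lemma qj_add (a b : ℍ[ℝ]) : qj (a + b) = qj a + qj b := by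
  simp [qj, Complex.ext_iff]
@[simp] lemma qre_zero : qre 0 = 0 := by simp [qre, Complex.ext_iff]
@[simp] lemma qj_zero : qj 0 = 0 := by simp [qj, Complex.ext_iff]
@[simp] lemma qre_one : qre 1 = 1 := by simp [qre, Complex.ext_iff]
@[simp] lemma qj_one : qj 1 = 0 := by simp [qj, Complex.ext_iff]
@[simp] lemma qre_neg (a : ℍ[ℝ]) : qre (-a) = - qre a := by simp [qre, Complex.ext_iff]
@[simp] lemma qj_neg (a : ℍ[ℝ]) : qj (-a) = - qj a := by simp [qj, Complex.ext_iff]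

lemma qre_mul (a b : ℍ[ℝ]) :
    qre (a * b) = qre a * qre b - qj a * (starRingEnd ℂ) (qj b) := by
  simp [qre, qj, Complex.ext_iff, Complex.mul_re, Complex.mul_im]
  constructor <;> ring

lemma qj_mul (a b : ℍ[ℝ]) :
    qj (a * b) = qre a * qj b + qj a * (starRingEnd ℂ) (qre b) := by
  simp [qre, qj, Complex.ext_iff, Complex.mul_re, Complex.mul_im]
  constructor <;> ring

@[simp] lemma qre_star (a : ℍ[ℝ]) : qre (star a) = (starRingEnd ℂ) (qre a) := by
  simp [qre, Complex.ext_iff]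
@[simp] lemma qj_star (a : ℍ[ℝ]) : qj (star a) = - qj a := by
  simp [qj, Complex.ext_iff]

lemma q_ext {a b : ℍ[ℝ]} (h1 : qre a = qre b) (h2 : qj a = qj b) : a = b := by
  simp only [qre, qj, Complex.ext_iff] at h1 h2
  ext <;> tauto

@[simp] lemma qre_cq (z : ℂ) : qre (cq z) = z := rfl
@[simp] lemma qj_cq (z : ℂ) : qj (cq z) = 0 := by simp [qj, cq, Complex.ext_iff]
@[simp] lemma qre_jq : qre jq = 0 := by simp [qre, jq, Complex.ext_iff]
@[simp] lemma qj_jq : qj jq = 1 := by simp [qj, jq, Complex.ext_iff]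

@[simp] lemma qre_two : qre 2 = 2 := rfl
@[simp] lemma qre_three : qre 3 = 3 := rfl
@[simp] lemma qre_four : qre 4 = 4 := rfl
@[simp] lemma qj_two : qj 2 = 0 := rfl
@[simp] lemma qj_three : qj 3 = 0 := rfl
@[simp] lemma qj_four : qj 4 = 0 := rfl

/-! ### Matrix-level decomposition -/

def cqHom : ℂ →+* ℍ[ℝ] where
  toFun := cq
  map_one' := by apply q_ext <;> simp
  map_mul' z w := by
    apply q_ext <;> simp [qre_mul, qj_mul]
  map_zero' := by apply q_ext <;> simp
  map_add' z w := by
    apply q_ext <;>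
      simp

@[simp] lemma cqHom_apply (z : ℂ) : cqHom z = cq z := rfl

lemma cq_star (z : ℂ) : cq ((starRingEnd ℂ) z) = star (cq z) := by
  apply q_ext <;> simp

variable {k l m : Type*}

def Cre (A : Matrix k l ℍ[ℝ]) : Matrix k l ℂ := Matrix.of fun i j => qre (A i j)
def Cj (A : Matrix k l ℍ[ℝ]) : Matrix k l ℂ := Matrix.of fun i j => qj (A i j)
def Cc (A : Matrix k l ℂ) : Matrix k l ℂ := A.map (starRingEnd ℂ)
def CQ (A : Matrix k l ℂ) : Matrix k l ℍ[ℝ] := A.map cq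

@[simp] lemma Cre_apply (A : Matrix k l ℍ[ℝ]) (i j) : Cre A i j = qre (A i j) := rfl
@[simp] lemma Cj_apply (A : Matrix k l ℍ[ℝ]) (i j) : Cj A i j = qj (A i j) := rfl
@[simp] lemma Cc_apply (A : Matrix k l ℂ) (i j) : Cc A i j = (starRingEnd ℂ) (A i j) := rfl
@[simp] lemma CQ_apply (A : Matrix k l ℂ) (i j) : CQ A i j = cq (A i j) := rfl

lemma qre_sum {ι : Type*} (s : Finset ι) (f : ι → ℍ[ℝ]) :
    qre (∑ i ∈ s, f i) = ∑ i ∈ s, qre (f i) :=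
  map_sum (⟨⟨qre, qre_zero⟩, qre_add⟩ : ℍ[ℝ] →+ ℂ) f s

lemma qj_sum {ι : Type*} (s : Finset ι) (f : ι → ℍ[ℝ]) :
    qj (∑ i ∈ s, f i) = ∑ i ∈ s, qj (f i) :=
  map_sum (⟨⟨qj, qj_zero⟩, qj_add⟩ : ℍ[ℝ] →+ ℂ) f s

lemma Cre_mul [Fintype l] (A : Matrix k l ℍ[ℝ]) (B : Matrix l m ℍ[ℝ]) :
    Cre (A * B) = Cre A * Cre B - Cj A * Cc (Cj B) := by
  ext i j
  simp [Matrix.mul_apply, Matrix.sub_apply, qre_sum, qre_mul, Finset.sum_sub_distrib]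

lemma Cj_mul [Fintype l] (A : Matrix k l ℍ[ℝ]) (B : Matrix l m ℍ[ℝ]) :
    Cj (A * B) = Cre A * Cj B + Cj A * Cc (Cre B) := by
  ext i j
  simp [Matrix.mul_apply, Matrix.add_apply, qj_sum, qj_mul, Finset.sum_add_distrib]

lemma Cre_conjT (A : Matrix k l ℍ[ℝ]) : Cre Aᴴ = (Cre A)ᴴ := by
  ext i j; simp [Matrix.conjTranspose_apply]

lemma Cj_conjT (A : Matrix k l ℍ[ℝ]) : Cj Aᴴ = -(Cj A)ᵀ := by
  ext i j; simp [Matrix.conjTranspose_apply, Matrix.transpose_apply]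

lemma mat_ext {A B : Matrix k l ℍ[ℝ]} (h1 : Cre A = Cre B) (h2 : Cj A = Cj B) :
    A = B :=
  Matrix.ext fun i j => q_ext (congrFun (congrFun h1 i) j) (congrFun (congrFun h2 i) j)

@[simp] lemma Cre_one [DecidableEq k] : Cre (1 : Matrix k k ℍ[ℝ]) = 1 := by
  ext i j
  by_cases h : i = j <;> simp [Matrix.one_apply, h]

@[simp] lemma Cj_one [DecidableEq k] : Cj (1 : Matrix k k ℍ[ℝ]) = 0 := by
  ext i j
  by_cases h : i = j <;> simp [Matrix.one_apply, h]

@[simp] lemma Cre_zero : Cre (0 : Matrix k l ℍ[ℝ]) = 0 := by ext i j; simp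
@[simp] lemma Cj_zero : Cj (0 : Matrix k l ℍ[ℝ]) = 0 := by ext i j; simp
@[simp] lemma Cre_CQ (A : Matrix k l ℂ) : Cre (CQ A) = A := by ext i j; simp
@[simp] lemma Cj_CQ (A : Matrix k l ℂ) : Cj (CQ A) = 0 := by ext i j; simp

lemma CQ_mul [Fintype l] (A : Matrix k l ℂ) (B : Matrix l m ℂ) :
    CQ (A * B) = CQ A * CQ B := Matrix.map_mul (f := cqHom)

@[simp] lemma CQ_one [DecidableEq k] : CQ (1 : Matrix k k ℂ) = 1 :=
  Matrix.map_one cq (by apply q_ext <;> simp) (by apply q_ext <;> simp)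

lemma CQ_conjT (A : Matrix k l ℂ) : CQ Aᴴ = (CQ A)ᴴ :=
  Matrix.ext fun i j => by simp [Matrix.conjTranspose_apply, cq_star]

lemma Cc_mul [Fintype l] (A : Matrix k l ℂ) (B : Matrix l m ℂ) :
    Cc (A * B) = Cc A * Cc B := Matrix.map_mul (f := starRingEnd ℂ)

@[simp] lemma Cc_one [DecidableEq k] : Cc (1 : Matrix k k ℂ) = 1 :=
  Matrix.map_one _ (by simp) (by simp)

@[simp] lemma Cc_Cc (A : Matrix k l ℂ) : Cc (Cc A) = A := by ext i j; simp

lemma Cc_conjT (A : Matrix k l ℂ) : Cc Aᴴ = (Cc A)ᴴ := by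
  ext i j; simp [Matrix.conjTranspose_apply]
@[simp] lemma Cc_zero : Cc (0 : Matrix k l ℂ) = 0 := by ext i j; simp

/-! ### Complex parts of the gadget -/

def wt : Fin 4 → ℂ := ![4, 3, 2, 1]

def X0 (n : ℕ) : Matrix (Fin 4 × Fin n) (Fin 4 × Fin n) ℂ :=
  Matrix.diagonal fun x => wt x.1

def YM {n : ℕ} (M : Matrix (Fin n) (Fin n) ℂ) :
    Matrix (Fin 4 × Fin n) (Fin 4 × Fin n) ℂ :=
  fun x y =>
    if x.1 = 0 ∧ y.1 = 2 then (if x.2 = y.2 then 1 else 0)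
    else if x.1 = 0 ∧ y.1 = 3 then M x.2 y.2
    else if x.1 = 1 ∧ y.1 = 2 then (if x.2 = y.2 then 1 else 0)
    else if x.1 = 1 ∧ y.1 = 3 then (if x.2 = y.2 then 1 else 0)
    else 0

@[simp] lemma qre_cq_mul_jq (z : ℂ) : qre (cq z * jq) = 0 := by
  simp [qre_mul]
@[simp] lemma qj_cq_mul_jq (z : ℂ) : qj (cq z * jq) = z := by
  simp [qj_mul]

lemma Cre_XM {n : ℕ} (M : Matrix (Fin n) (Fin n) ℂ) : Cre (XM M) = X0 n := by
  refine Matrix.ext fun x y => ?_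
  obtain ⟨a, p⟩ := x
  obtain ⟨b, q⟩ := y
  simp only [Cre_apply, XM, X0, Matrix.diagonal_apply, Prod.mk.injEq]
  fin_cases a <;> fin_cases b <;>
    by_cases hpq : p = q <;>
      simp [wt, hpq, mul_ite, ite_mul, mul_one, mul_zero, one_mul, zero_mul]

lemma Cj_XM {n : ℕ} (M : Matrix (Fin n) (Fin n) ℂ) : Cj (XM M) = YM M := by
  refine Matrix.ext fun x y => ?_
  obtain ⟨a, p⟩ := x
  obtain ⟨b, q⟩ := y
  simp only [Cj_apply, XM, YM]
  fin_cases a <;> fin_cases b <;>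
    by_cases hpq : p = q <;>
      simp [hpq, mul_ite, ite_mul, mul_one, mul_zero, one_mul, zero_mul]

/-! ### The complex adjoint and `AB = 1 → BA = 1` over the quaternions -/

section Chi
variable {k : Type*} [Fintype k] [DecidableEq k]

def chi (A : Matrix k k ℍ[ℝ]) : Matrix (k ⊕ k) (k ⊕ k) ℂ :=
  Matrix.fromBlocks (Cre A) (Cj A) (-(Cc (Cj A))) (Cc (Cre A))

@[simp] lemma Cc_add (A B : Matrix k l ℂ) : Cc (A + B) = Cc A + Cc B := by
  ext i j; simp
@[simp] lemma Cc_sub (A B : Matrix k l ℂ) : Cc (A - B) = Cc A - Cc B := by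
  ext i j; simp

lemma chi_mul (A B : Matrix k k ℍ[ℝ]) : chi (A * B) = chi A * chi B := by
  unfold chi
  have h11 : Cre (A * B) = Cre A * Cre B + Cj A * -Cc (Cj B) := by
    rw [Cre_mul]; noncomm_ring
  have h21 : -Cc (Cj (A * B)) = -Cc (Cj A) * Cre B + Cc (Cre A) * -Cc (Cj B) := by
    rw [Cj_mul, Cc_add, Cc_mul, Cc_mul, Cc_Cc]; noncomm_ring
  have h22 : Cc (Cre (A * B)) = -Cc (Cj A) * Cj B + Cc (Cre A) * Cc (Cre B) := by
    rw [Cre_mul, Cc_sub, Cc_mul, Cc_mul, Cc_Cc]; noncomm_ring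
  rw [Matrix.fromBlocks_multiply, h22, h21, h11, Cj_mul]

lemma chi_one : chi (1 : Matrix k k ℍ[ℝ]) = 1 := by
  unfold chi
  simp [Matrix.fromBlocks_one]

lemma chi_inj {A B : Matrix k k ℍ[ℝ]} (h : chi A = chi B) : A = B := by
  unfold chi at h
  have h1 := congrArg Matrix.toBlocks₁₁ h
  have h2 := congrArg Matrix.toBlocks₁₂ h
  simp only [Matrix.toBlocks_fromBlocks₁₁, Matrix.toBlocks_fromBlocks₁₂] at h1 h2
  exact mat_ext h1 h2

lemma q_mul_eq_one_comm {A B : Matrix k k ℍ[ℝ]} (h : A * B = 1) : B * A = 1 := by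
  apply chi_inj
  rw [chi_mul, chi_one]
  rw [← mul_eq_one_comm, ← chi_mul, h, chi_one]

end Chi

/-! ### Commutation with the scalar diagonal -/

lemma qj_eq_zero_of_comm {lam : ℂ} (h : lam.im ≠ 0) {b : ℍ[ℝ]}
    (hb : cq lam * b = b * cq lam) : qj b = 0 := by
  have hq := congrArg qj hb
  rw [qj_mul, qj_mul] at hq
  simp at hq
  -- hq : lam * qj b = qj b * conj lam
  have h2 : (lam - (starRingEnd ℂ) lam) * qj b = 0 := by
    rw [sub_mul, hq]; ring
  rcases mul_eq_zero.mp h2 with h3 | h3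
  · exfalso
    apply h
    have : (starRingEnd ℂ) lam = lam := by linear_combination -h3
    simpa [Complex.conj_eq_iff_im] using this
  · exact h3

lemma Cj_eq_zero_of_comm {k : Type*} [Fintype k] [DecidableEq k] {lam : ℂ}
    (h : lam.im ≠ 0) {B : Matrix k k ℍ[ℝ]}
    (hB : Matrix.diagonal (fun _ => cq lam) * B = B * Matrix.diagonal (fun _ => cq lam)) :
    Cj B = 0 := by
  ext i j
  refine qj_eq_zero_of_comm h ?_
  have := congrFun (congrFun hB i) j
  rwa [Matrix.diagonal_mul, Matrix.mul_diagonal] at this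

/-! ### Diagonal matrix helpers over ℂ -/

section DiagHelp
variable {k : Type*} [Fintype k] [DecidableEq k]

lemma diag_mul_eq_zero {d : k → ℂ} (hd : ∀ x, d x ≠ 0) {l : Type*} {A : Matrix k l ℂ}
    (h : Matrix.diagonal d * A = 0) : A = 0 := by
  ext i j
  have := congrFun (congrFun h i) j
  rw [Matrix.diagonal_mul] at this
  simpa [hd i] using this

lemma mul_diag_eq_zero {d : k → ℂ} (hd : ∀ x, d x ≠ 0) {l : Type*} {A : Matrix l k ℂ}
    (h : A * Matrix.diagonal d = 0) : A = 0 := by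
  ext i j
  have := congrFun (congrFun h i) j
  rw [Matrix.mul_diagonal] at this
  simpa [hd j] using this

lemma diag_mul_cancel {d : k → ℂ} (hd : ∀ x, d x ≠ 0) {l : Type*} {A B : Matrix k l ℂ}
    (h : Matrix.diagonal d * A = Matrix.diagonal d * B) : A = B := by
  ext i j
  have := congrFun (congrFun h i) j
  rw [Matrix.diagonal_mul, Matrix.diagonal_mul] at this
  exact mul_left_cancel₀ (hd i) this

lemma entry_zero_of_comm_diag {d : k → ℂ} {A : Matrix k k ℂ}
    (h : A * Matrix.diagonal d = Matrix.diagonal d * A) {x y : k} (hxy : d x ≠ d y) :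
    A x y = 0 := by
  have := congrFun (congrFun h x) y
  rw [Matrix.mul_diagonal, Matrix.diagonal_mul] at this
  by_contra hA
  apply hxy
  rw [mul_comm (d x) (A x y)] at this
  exact (mul_left_cancel₀ hA this).symm

end DiagHelp

/-! ### Facts about `wt` and `X0` -/

lemma wt_ne_zero (a : Fin 4) : wt a ≠ 0 := by
  fin_cases a <;> simp [wt] <;> norm_num

lemma wt_real (a : Fin 4) : (starRingEnd ℂ) (wt a) = wt a := by
  fin_cases a <;> simp [wt, Complex.ext_iff]

lemma wt_sq_inj {a b : Fin 4} (h : wt a * wt a = wt b * wt b) : a = b := by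
  fin_cases a <;> fin_cases b <;> first
    | rfl
    | (exfalso; revert h; simp [wt]; intro h; norm_num [Complex.ext_iff] at h)

lemma X0_conjT (n : ℕ) : (X0 n)ᴴ = X0 n := by
  ext x y
  rcases eq_or_ne x y with h | h
  · subst h
    simp [X0, Matrix.conjTranspose_apply, Matrix.diagonal_apply, wt_real]
  · simp [X0, Matrix.conjTranspose_apply, Matrix.diagonal_apply, h, Ne.symm h]

/-! ### Scalar diagonal blocks -/

section ScalarDiag
variable {k : Type*} [Fintype k] [DecidableEq k] {l : Type*}

@[simp] lemma Cre_madd (A B : Matrix k l ℍ[ℝ]) : Cre (A + B) = Cre A + Cre B := by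
  ext i j; simp
@[simp] lemma Cj_madd (A B : Matrix k l ℍ[ℝ]) : Cj (A + B) = Cj A + Cj B := by
  ext i j; simp

@[simp] lemma Cre_diag_cq (lam : ℂ) :
    Cre (Matrix.diagonal fun _ : k => cq lam) = Matrix.diagonal fun _ => lam := by
  ext i j
  rcases eq_or_ne i j with h | h <;> simp [Matrix.diagonal_apply, h]

@[simp] lemma Cj_diag_cq (lam : ℂ) :
    Cj (Matrix.diagonal fun _ : k => cq lam) = 0 := by
  ext i j
  rcases eq_or_ne i j with h | h <;> simp [Matrix.diagonal_apply, h]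

lemma diag_cq_conjT (lam : ℂ) :
    (Matrix.diagonal fun _ : k => cq lam)ᴴ =
      Matrix.diagonal fun _ : k => cq ((starRingEnd ℂ) lam) := by
  refine Matrix.ext fun i j => ?_
  rcases eq_or_ne i j with h | h
  · subst h; simp [Matrix.conjTranspose_apply, Matrix.diagonal_apply, cq_star]
  · simp [Matrix.conjTranspose_apply, Matrix.diagonal_apply, h, Ne.symm h]

lemma scalar_diag_comm (lam : ℂ) (A : Matrix k k ℂ) :
    A * Matrix.diagonal (fun _ => lam) = Matrix.diagonal (fun _ => lam) * A := by
  ext i j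
  rw [Matrix.mul_diagonal, Matrix.diagonal_mul, mul_comm]

lemma cq_comm (z w : ℂ) : cq z * cq w = cq w * cq z := by
  have h1 : cq z * cq w = cq (z * w) := (map_mul cqHom z w).symm
  have h2 : cq w * cq z = cq (w * z) := (map_mul cqHom w z).symm
  rw [h1, h2, mul_comm]

end ScalarDiag

/-! ### Backward direction -/

set_option maxHeartbeats 2000000 in
lemma backward {n : ℕ} {lam : ℂ} (hlam : lam.im ≠ 0) {M N : Matrix (Fin n) (Fin n) ℂ}
    (h : UnitarilySimilar (AM lam M) (AM lam N)) :
    ∃ U : Matrix (Fin n) (Fin n) ℂ, Uᴴ * U = 1 ∧ N = Uᴴ * M * U := by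
  obtain ⟨V, hVu, hsim⟩ := h
  have hVu' : Vᴴ * V = 1 := hVu
  have hVV : V * Vᴴ = 1 := q_mul_eq_one_comm hVu'
  set L : Matrix (Fin 4 × Fin n) (Fin 4 × Fin n) ℍ[ℝ] :=
    Matrix.diagonal fun _ => cq lam with hLdef
  have hAMdef : ∀ K : Matrix (Fin n) (Fin n) ℂ,
      AM lam K = Matrix.fromBlocks L (XM K) 0 L := fun K => rfl
  have hc : V * AM lam M = AM lam N * V := by
    rw [hsim, ← Matrix.mul_assoc, ← Matrix.mul_assoc, hVV, Matrix.one_mul]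
  have hcH : V * (AM lam M)ᴴ = (AM lam N)ᴴ * V := by
    have h2 : (AM lam M)ᴴ = Vᴴ * (AM lam N)ᴴ * V := by
      rw [hsim, Matrix.conjTranspose_mul, Matrix.conjTranspose_mul,
        Matrix.conjTranspose_conjTranspose, ← Matrix.mul_assoc]
    rw [h2, ← Matrix.mul_assoc, ← Matrix.mul_assoc, hVV, Matrix.one_mul]
  set P := V.toBlocks₁₁ with hPdef
  set Q := V.toBlocks₁₂ with hQdef
  set R := V.toBlocks₂₁ with hRdef
  set S := V.toBlocks₂₂ with hSdef
  have hV : V = Matrix.fromBlocks P Q R S := (Matrix.fromBlocks_toBlocks V).symm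
  -- block equations from hc
  have key := hc
  rw [hV, hAMdef M, hAMdef N, Matrix.fromBlocks_multiply, Matrix.fromBlocks_multiply] at key
  simp only [Matrix.mul_zero, Matrix.zero_mul, add_zero, zero_add] at key
  have e11 : P * L = L * P + XM N * R := by
    have := congrArg Matrix.toBlocks₁₁ key
    simpa only [Matrix.toBlocks_fromBlocks₁₁] using this
  have e12 : P * XM M + Q * L = L * Q + XM N * S := by
    have := congrArg Matrix.toBlocks₁₂ key
    simpa only [Matrix.toBlocks_fromBlocks₁₂] using this
  have e21 : R * L = L * R := by
    have := congrArg Matrix.toBlocks₂₁ key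
    simpa only [Matrix.toBlocks_fromBlocks₂₁] using this
  have e22 : R * XM M + S * L = L * S := by
    have := congrArg Matrix.toBlocks₂₂ key
    simpa only [Matrix.toBlocks_fromBlocks₂₂] using this
  -- block equations from hcH
  have hAMH : ∀ K : Matrix (Fin n) (Fin n) ℂ,
      (AM lam K)ᴴ = Matrix.fromBlocks Lᴴ 0 (XM K)ᴴ Lᴴ := by
    intro K
    rw [hAMdef K, Matrix.fromBlocks_conjTranspose, Matrix.conjTranspose_zero]
  have keyH := hcH
  rw [hV, hAMH M, hAMH N, Matrix.fromBlocks_multiply, Matrix.fromBlocks_multiply] at keyH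
  simp only [Matrix.mul_zero, Matrix.zero_mul, add_zero, zero_add] at keyH
  have f11 : P * Lᴴ + Q * (XM M)ᴴ = Lᴴ * P := by
    have := congrArg Matrix.toBlocks₁₁ keyH
    simpa only [Matrix.toBlocks_fromBlocks₁₁] using this
  have f12 : Q * Lᴴ = Lᴴ * Q := by
    have := congrArg Matrix.toBlocks₁₂ keyH
    simpa only [Matrix.toBlocks_fromBlocks₁₂] using this
  -- the j-part of R and Q vanish
  have hLH : Lᴴ = Matrix.diagonal fun _ => cq ((starRingEnd ℂ) lam) := diag_cq_conjT lam
  have hRj : Cj R = 0 := Cj_eq_zero_of_comm hlam e21.symm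
  have hQj : Cj Q = 0 := by
    refine Cj_eq_zero_of_comm (lam := (starRingEnd ℂ) lam) ?_ ?_
    · simpa using hlam
    · rw [← hLH]; exact f12.symm
  have hX0 : X0 n = Matrix.diagonal fun x : Fin 4 × Fin n => wt x.1 := rfl
  -- real part of R vanishes
  have hRre : Cre R = 0 := by
    have hcre := congrArg Cre e11
    simp only [hLdef, Cre_madd, Cre_mul, Cre_XM, Cj_XM, Cre_diag_cq, Cj_diag_cq, hRj,
      Cc_zero, Matrix.mul_zero, Matrix.zero_mul, sub_zero] at hcre
    rw [scalar_diag_comm] at hcre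
    have h1 := left_eq_add.mp hcre
    rw [hX0] at h1
    exact diag_mul_eq_zero (fun x => wt_ne_zero x.1) h1
  have hR : R = 0 := mat_ext (by rw [hRre, Cre_zero]) (by rw [hRj, Cj_zero])
  -- j-part of P vanishes
  have hPj : Cj P = 0 := by
    refine Cj_eq_zero_of_comm hlam ?_
    rw [hR, Matrix.mul_zero, add_zero] at e11
    exact e11.symm
  -- Q vanishes
  have hQre : Cre Q = 0 := by
    have hcre := congrArg Cre f11
    simp only [hLH, Cre_madd, Cre_mul, Cre_conjT, Cj_conjT, Cre_XM, Cj_XM, X0_conjT,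
      Cre_diag_cq, Cj_diag_cq, hQj, Cc_zero, Matrix.mul_zero, Matrix.zero_mul,
      sub_zero] at hcre
    rw [scalar_diag_comm] at hcre
    have h1 := add_eq_left.mp hcre
    rw [hX0] at h1
    exact mul_diag_eq_zero (fun x => wt_ne_zero x.1) h1
  have hQ : Q = 0 := mat_ext (by rw [hQre, Cre_zero]) (by rw [hQj, Cj_zero])
  -- j-part of S vanishes
  have hSj : Cj S = 0 := by
    refine Cj_eq_zero_of_comm hlam ?_
    rw [hR, Matrix.zero_mul, zero_add] at e22
    exact e22.symm
  -- the main intertwining equation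
  have hPX : P * XM M = XM N * S := by
    rw [hQ, Matrix.zero_mul, add_zero, Matrix.mul_zero, zero_add] at e12
    exact e12
  have hCre : Cre P * X0 n = X0 n * Cre S := by
    have hx := congrArg Cre hPX
    simp only [Cre_mul, Cre_XM, Cj_XM, hPj, hSj, Cc_zero, Matrix.mul_zero,
      Matrix.zero_mul, sub_zero] at hx
    exact hx
  have hCj : Cre P * YM M = YM N * Cc (Cre S) := by
    have hx := congrArg Cj hPX
    simp only [Cj_mul, Cre_XM, Cj_XM, hPj, hSj, Cc_zero, Matrix.mul_zero,
      Matrix.zero_mul, add_zero, zero_add] at hx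
    exact hx
  -- unitarity of the diagonal blocks
  have hu := hVu'
  rw [hV, hQ, hR, Matrix.fromBlocks_conjTranspose, Matrix.conjTranspose_zero,
    Matrix.fromBlocks_multiply] at hu
  simp only [Matrix.mul_zero, Matrix.zero_mul, add_zero, zero_add] at hu
  rw [← Matrix.fromBlocks_one] at hu
  have hPu : Pᴴ * P = 1 := by
    have := congrArg Matrix.toBlocks₁₁ hu
    simpa only [Matrix.toBlocks_fromBlocks₁₁] using this
  have hSu : Sᴴ * S = 1 := by
    have := congrArg Matrix.toBlocks₂₂ hu
    simpa only [Matrix.toBlocks_fromBlocks₂₂] using this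
  have hPcu : (Cre P)ᴴ * Cre P = 1 := by
    have hx := congrArg Cre hPu
    simp only [Cre_mul, Cre_conjT, Cj_conjT, hPj, Matrix.transpose_zero, neg_zero,
      Cc_zero, Matrix.mul_zero, Matrix.zero_mul, sub_zero, Cre_one] at hx
    exact hx
  have hScu : (Cre S)ᴴ * Cre S = 1 := by
    have hx := congrArg Cre hSu
    simp only [Cre_mul, Cre_conjT, Cj_conjT, hSj, Matrix.transpose_zero, neg_zero,
      Cc_zero, Matrix.mul_zero, Matrix.zero_mul, sub_zero, Cre_one] at hx
    exact hx
  have hScu' : Cre S * (Cre S)ᴴ = 1 := mul_eq_one_comm.mp hScu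
  -- the first diagonal block is block-diagonal over `Fin 4`
  have hsq : Cre P * (X0 n * X0 n) * (Cre P)ᴴ = X0 n * X0 n := by
    have step1 : Cre P * (X0 n * X0 n) * (Cre P)ᴴ
        = (Cre P * X0 n) * (Cre P * X0 n)ᴴ := by
      rw [Matrix.conjTranspose_mul, X0_conjT]
      simp only [Matrix.mul_assoc]
    rw [step1, hCre, Matrix.conjTranspose_mul, X0_conjT, Matrix.mul_assoc,
      ← Matrix.mul_assoc (Cre S), hScu', Matrix.one_mul]
  have hX2 : Cre P * (X0 n * X0 n) = (X0 n * X0 n) * Cre P := by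
    have h2 := congrArg (fun A => A * Cre P) hsq
    rwa [Matrix.mul_assoc (Cre P * (X0 n * X0 n)), hPcu, Matrix.mul_one] at h2
  have hblock : ∀ x y : Fin 4 × Fin n, x.1 ≠ y.1 → Cre P x y = 0 := by
    intro x y hxy
    have hdd : X0 n * X0 n = Matrix.diagonal fun x : Fin 4 × Fin n => wt x.1 * wt x.1 := by
      rw [hX0, Matrix.diagonal_mul_diagonal]
    refine entry_zero_of_comm_diag (d := fun x : Fin 4 × Fin n => wt x.1 * wt x.1)
      ?_ (fun hc => hxy (wt_sq_inj hc))
    rw [← hdd]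
    exact hX2
  have hcomm : Cre P * X0 n = X0 n * Cre P := by
    ext x y
    rw [hX0, Matrix.mul_diagonal, Matrix.diagonal_mul]
    rcases eq_or_ne x.1 y.1 with h | h
    · rw [h, mul_comm]
    · rw [hblock x y h, zero_mul, mul_zero]
  have hSc : Cre S = Cre P := by
    have hgoal : X0 n * Cre S = X0 n * Cre P := by rw [← hCre, hcomm]
    rw [hX0] at hgoal
    exact diag_mul_cancel (k := Fin 4 × Fin n) (l := Fin 4 × Fin n)
      (d := fun x : Fin 4 × Fin n => wt x.1) (A := Cre S) (B := Cre P)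
      (fun x => wt_ne_zero x.1) hgoal
  have hCj' : Cre P * YM M = YM N * Cc (Cre P) := by rwa [hSc] at hCj
  -- entrywise relations
  have z : ∀ a b : Fin 4, a ≠ b → ∀ p q : Fin n, Cre P (a, p) (b, q) = 0 :=
    fun a b hab p q => hblock (a, p) (b, q) hab
  have zq : ∀ a b : Fin 4, a ≠ b → ∀ p q : Fin n, qre (P (a, p) (b, q)) = 0 :=
    fun a b hab p q => hblock (a, p) (b, q) hab
  have e02 : ∀ p q : Fin n,
      Cre P ((0 : Fin 4), p) ((0 : Fin 4), q)
        = (starRingEnd ℂ) (Cre P ((2 : Fin 4), p) ((2 : Fin 4), q)) := by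
    intro p q
    have hent := congrFun (congrFun hCj' ((0 : Fin 4), p)) ((2 : Fin 4), q)
    rw [Matrix.mul_apply, Matrix.mul_apply, Fintype.sum_prod_type, Fintype.sum_prod_type,
      Fin.sum_univ_four, Fin.sum_univ_four] at hent
    simpa [YM, mul_ite, ite_mul, mul_one, mul_zero, one_mul, zero_mul,
      Finset.sum_ite_eq, Finset.sum_ite_eq', zq 0 1 (by decide), zq 3 2 (by decide)]
      using hent
  have e12' : ∀ p q : Fin n,
      Cre P ((1 : Fin 4), p) ((1 : Fin 4), q)
        = (starRingEnd ℂ) (Cre P ((2 : Fin 4), p) ((2 : Fin 4), q)) := by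
    intro p q
    have hent := congrFun (congrFun hCj' ((1 : Fin 4), p)) ((2 : Fin 4), q)
    rw [Matrix.mul_apply, Matrix.mul_apply, Fintype.sum_prod_type, Fintype.sum_prod_type,
      Fin.sum_univ_four, Fin.sum_univ_four] at hent
    simpa [YM, mul_ite, ite_mul, mul_one, mul_zero, one_mul, zero_mul,
      Finset.sum_ite_eq, Finset.sum_ite_eq', zq 1 0 (by decide), zq 3 2 (by decide)]
      using hent
  have e13' : ∀ p q : Fin n,
      Cre P ((1 : Fin 4), p) ((1 : Fin 4), q)
        = (starRingEnd ℂ) (Cre P ((3 : Fin 4), p) ((3 : Fin 4), q)) := by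
    intro p q
    have hent := congrFun (congrFun hCj' ((1 : Fin 4), p)) ((3 : Fin 4), q)
    rw [Matrix.mul_apply, Matrix.mul_apply, Fintype.sum_prod_type, Fintype.sum_prod_type,
      Fin.sum_univ_four, Fin.sum_univ_four] at hent
    simpa [YM, mul_ite, ite_mul, mul_one, mul_zero, one_mul, zero_mul,
      Finset.sum_ite_eq, Finset.sum_ite_eq', zq 1 0 (by decide), zq 2 3 (by decide)]
      using hent
  have e03 : ∀ p q : Fin n,
      (∑ r, Cre P ((0 : Fin 4), p) ((0 : Fin 4), r) * M r q)
        = ∑ r, N p r * (starRingEnd ℂ) (Cre P ((3 : Fin 4), r) ((3 : Fin 4), q)) := by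
    intro p q
    have hent := congrFun (congrFun hCj' ((0 : Fin 4), p)) ((3 : Fin 4), q)
    rw [Matrix.mul_apply, Matrix.mul_apply, Fintype.sum_prod_type, Fintype.sum_prod_type,
      Fin.sum_univ_four, Fin.sum_univ_four] at hent
    simpa [YM, mul_ite, ite_mul, mul_one, mul_zero, one_mul, zero_mul,
      Finset.sum_ite_eq, Finset.sum_ite_eq', zq 0 1 (by decide), zq 2 3 (by decide)]
      using hent
  -- assemble the complex unitary
  set P0 : Matrix (Fin n) (Fin n) ℂ :=
    Matrix.of (fun p q => Cre P ((0 : Fin 4), p) ((0 : Fin 4), q)) with hP0def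
  have hP3 : ∀ p q : Fin n,
      (starRingEnd ℂ) (Cre P ((3 : Fin 4), p) ((3 : Fin 4), q)) = P0 p q := by
    intro p q
    rw [← e13', e12', ← e02]
    rfl
  have hP0M : P0 * M = N * P0 := by
    ext p q
    rw [Matrix.mul_apply, Matrix.mul_apply]
    calc (∑ r, P0 p r * M r q)
        = ∑ r, N p r * (starRingEnd ℂ) (Cre P ((3 : Fin 4), r) ((3 : Fin 4), q)) :=
          e03 p q
      _ = ∑ r, N p r * P0 r q := by
          refine Finset.sum_congr rfl fun r _ => ?_
          rw [hP3]
  have hP0u : P0ᴴ * P0 = 1 := by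
    ext p q
    have hent := congrFun (congrFun hPcu ((0 : Fin 4), p)) ((0 : Fin 4), q)
    rw [Matrix.mul_apply, Fintype.sum_prod_type, Fin.sum_univ_four] at hent
    simp only [Matrix.conjTranspose_apply, z 1 0 (by decide), z 2 0 (by decide),
      z 3 0 (by decide), star_zero, zero_mul, mul_zero, Finset.sum_const_zero,
      add_zero] at hent
    have hone : (1 : Matrix (Fin 4 × Fin n) (Fin 4 × Fin n) ℂ) ((0 : Fin 4), p) ((0 : Fin 4), q)
        = (1 : Matrix (Fin n) (Fin n) ℂ) p q := by
      by_cases hpq : p = q <;> simp [Matrix.one_apply, hpq, Prod.ext_iff]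
    rw [hone] at hent
    rw [Matrix.mul_apply]
    simp only [Matrix.conjTranspose_apply]
    exact hent
  refine ⟨P0ᴴ, ?_, ?_⟩
  · rw [Matrix.conjTranspose_conjTranspose]
    exact mul_eq_one_comm.mp hP0u
  · rw [Matrix.conjTranspose_conjTranspose]
    have hP0P0 : P0 * P0ᴴ = 1 := mul_eq_one_comm.mp hP0u
    calc N = N * (P0 * P0ᴴ) := by rw [hP0P0, Matrix.mul_one]
      _ = (N * P0) * P0ᴴ := by rw [Matrix.mul_assoc]
      _ = (P0 * M) * P0ᴴ := by rw [hP0M]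
      _ = P0 * M * P0ᴴ := rfl

/-! ### Forward direction -/

set_option maxHeartbeats 1000000 in
lemma forward {n : ℕ} (lam : ℂ) (M N : Matrix (Fin n) (Fin n) ℂ)
    (U : Matrix (Fin n) (Fin n) ℂ) (hU : Uᴴ * U = 1) (hN : N = Uᴴ * M * U) :
    UnitarilySimilar (AM lam M) (AM lam N) := by
  have hUU : U * Uᴴ = 1 := mul_eq_one_comm.mp hU
  have hMU : Uᴴ * M = N * Uᴴ := by
    rw [hN, Matrix.mul_assoc, Matrix.mul_assoc, hUU, Matrix.mul_one]
  set B : Fin 4 → Matrix (Fin n) (Fin n) ℂ := ![Uᴴ, Uᴴ, Uᵀ, Uᵀ] with hBdef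
  set Gc : Matrix (Fin 4 × Fin n) (Fin 4 × Fin n) ℂ :=
    Matrix.of (fun x y => if x.1 = y.1 then B x.1 x.2 y.2 else 0) with hGcdef
  have hGcapp : ∀ (a b : Fin 4) (p q : Fin n),
      Gc (a, p) (b, q) = if a = b then B a p q else 0 := fun a b p q => rfl
  have hUT : Uᵀ = Cc Uᴴ := by
    ext i j
    simp [Matrix.transpose_apply, Matrix.conjTranspose_apply]
  have hTu : (Uᵀ)ᴴ * Uᵀ = 1 := by
    rw [hUT, ← Cc_conjT, Matrix.conjTranspose_conjTranspose, ← Cc_mul, hUU, Cc_one]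
  have hBu : ∀ a : Fin 4, (B a)ᴴ * B a = 1 := by
    intro a
    have h0 : (Uᴴ)ᴴ * Uᴴ = 1 := by
      rw [Matrix.conjTranspose_conjTranspose]; exact hUU
    fin_cases a <;> simp only [hBdef] <;>
      first
        | exact h0
        | exact hTu
        | (simp only [Matrix.cons_val_zero, Matrix.cons_val_one, Matrix.head_cons,
            Matrix.cons_val_two, Matrix.tail_cons, Matrix.cons_val_three]
           first
             | exact h0
             | exact hTu)
  have hGcu : Gcᴴ * Gc = 1 := by
    ext x y
    obtain ⟨a, p⟩ := x
    obtain ⟨b, q⟩ := y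
    rw [Matrix.mul_apply, Fintype.sum_prod_type, Fin.sum_univ_four]
    simp only [Matrix.conjTranspose_apply, hGcapp]
    rcases eq_or_ne a b with hab | hab
    · subst hab
      have hone : (1 : Matrix (Fin 4 × Fin n) (Fin 4 × Fin n) ℂ) (a, p) (a, q)
          = (1 : Matrix (Fin n) (Fin n) ℂ) p q := by
        by_cases hpq : p = q <;> simp [Matrix.one_apply, hpq, Prod.ext_iff]
      rw [hone]
      have hBa := congrFun (congrFun (hBu a) p) q
      rw [Matrix.mul_apply] at hBa
      simp only [Matrix.conjTranspose_apply] at hBa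
      rw [← hBa]
      fin_cases a <;>
        simp [star_zero, zero_mul, mul_zero, Finset.sum_const_zero]
    · have hone : (1 : Matrix (Fin 4 × Fin n) (Fin 4 × Fin n) ℂ) (a, p) (b, q) = 0 := by
        simp [Matrix.one_apply, Prod.ext_iff, hab]
      rw [hone]
      fin_cases a <;> fin_cases b <;>
        first
          | (exact absurd rfl hab)
          | simp [star_zero, zero_mul, mul_zero, Finset.sum_const_zero]
  have hGX0 : Gc * X0 n = X0 n * Gc := by
    ext x y
    rw [show X0 n = Matrix.diagonal fun x : Fin 4 × Fin n => wt x.1 from rfl,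
      Matrix.mul_diagonal, Matrix.diagonal_mul]
    obtain ⟨a, p⟩ := x
    obtain ⟨b, q⟩ := y
    rcases eq_or_ne a b with hab | hab
    · subst hab; rw [mul_comm]
    · rw [hGcapp, if_neg hab, zero_mul, mul_zero]
  have hMUe : ∀ p q : Fin n,
      (∑ r, (starRingEnd ℂ) (U r p) * M r q) = ∑ r, N p r * (starRingEnd ℂ) (U q r) := by
    intro p q
    have := congrFun (congrFun hMU p) q
    rw [Matrix.mul_apply, Matrix.mul_apply] at this
    simpa only [Matrix.conjTranspose_apply, RCLike.star_def] using this
  have hGY : Gc * YM M = YM N * Cc Gc := by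
    ext x y
    obtain ⟨a, p⟩ := x
    obtain ⟨b, q⟩ := y
    rw [Matrix.mul_apply, Matrix.mul_apply, Fintype.sum_prod_type, Fintype.sum_prod_type,
      Fin.sum_univ_four, Fin.sum_univ_four]
    simp only [Cc_apply, hGcapp]
    fin_cases a <;> fin_cases b <;>
      simp [YM, hBdef, mul_ite, ite_mul, mul_one, mul_zero, one_mul, zero_mul,
        Finset.sum_ite_eq, Finset.sum_ite_eq', Matrix.conjTranspose_apply,
        Matrix.transpose_apply, hMUe p q]
  -- assemble the quaternionic unitary
  set G : Matrix (Fin 4 × Fin n) (Fin 4 × Fin n) ℍ[ℝ] := CQ Gc with hGdef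
  set L : Matrix (Fin 4 × Fin n) (Fin 4 × Fin n) ℍ[ℝ] :=
    Matrix.diagonal fun _ => cq lam with hLdef
  have hGL : G * L = L * G := by
    refine Matrix.ext fun x y => ?_
    rw [hLdef, Matrix.mul_diagonal, Matrix.diagonal_mul]
    exact cq_comm (Gc x y) lam
  have hGXM : G * XM M = XM N * G := by
    refine mat_ext ?_ ?_
    · rw [Cre_mul, Cre_mul, Cre_XM, Cre_XM, Cj_XM, hGdef, Cre_CQ, Cj_CQ, Cc_zero,
        Matrix.zero_mul, Matrix.mul_zero, sub_zero, sub_zero, hGX0]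
    · rw [Cj_mul, Cj_mul, Cre_XM, Cre_XM, Cj_XM, Cj_XM, hGdef, Cre_CQ, Cj_CQ,
        Matrix.mul_zero, Matrix.zero_mul, add_zero, zero_add, hGY]
  set W := Matrix.fromBlocks G 0 0 G with hWdef
  have hGu : Gᴴ * G = 1 := by
    rw [hGdef, ← CQ_conjT, ← CQ_mul, hGcu, CQ_one]
  have hWu : IsUnitaryM W := by
    unfold IsUnitaryM
    rw [hWdef, Matrix.fromBlocks_conjTranspose, Matrix.conjTranspose_zero,
      Matrix.fromBlocks_multiply]
    simp only [Matrix.mul_zero, Matrix.zero_mul, add_zero, zero_add, hGu]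
    exact Matrix.fromBlocks_one
  have hWA : W * AM lam M = AM lam N * W := by
    have hAMdef : ∀ K : Matrix (Fin n) (Fin n) ℂ,
        AM lam K = Matrix.fromBlocks L (XM K) 0 L := fun K => rfl
    rw [hWdef, hAMdef M, hAMdef N, Matrix.fromBlocks_multiply, Matrix.fromBlocks_multiply]
    simp only [Matrix.mul_zero, Matrix.zero_mul, add_zero, zero_add, hGL, hGXM]
  refine ⟨W, hWu, ?_⟩
  have hWW : W * Wᴴ = 1 := q_mul_eq_one_comm hWu
  calc AM lam M = (Wᴴ * W) * AM lam M := by rw [hWu, Matrix.one_mul]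
    _ = Wᴴ * (W * AM lam M) := by rw [Matrix.mul_assoc]
    _ = Wᴴ * (AM lam N * W) := by rw [hWA]
    _ = Wᴴ * AM lam N * W := by rw [Matrix.mul_assoc]

/-- **Theorem 3.2(a), key gadget.** For `λ = x + yi` with `y > 0`: two complex matrices
`M`, `N` are unitarily similar over `ℂ` iff the quaternion matrices `A_M`, `A_N` are
unitarily similar over `ℍ`. -/
theorem complex_unitary_similarity_reduces_to_quaternion {n : ℕ} (lam : ℂ)
    (hlam : 0 < lam.im) (M N : Matrix (Fin n) (Fin n) ℂ) :
    (∃ U : Matrix (Fin n) (Fin n) ℂ, Uᴴ * U = 1 ∧ N = Uᴴ * M * U) ↔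
      UnitarilySimilar (AM lam M) (AM lam N) := by
  constructor
  · rintro ⟨U, hU, hN⟩
    exact forward lam M N U hU hN
  · intro h
    exact backward (ne_of_gt hlam) h
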